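/- Non-Cauchy property of plane-wave cylindrical approximations: let k ∈ ℝ^ℕ and k_n = (k₁,…,k_n,0,0,…). Define cylinder functions f_n(x) = e^{(i/ℏ) k_n·x} on ℝ^ℕ. With Gaussian windows g_n(x)=(2πℏ)^{-n/2}e^{-⟨x,Qx⟩/(2ℏ)}, Q=diag(q₁,…,q_n), q_j>0, and the cylinder norm ‖f_n - f_m‖ := ‖\tilde f_n - E_m^n \tilde f_m‖_{M^{∞,1}_{(g_n)}(ℝⁿ)} (n > m), one has ‖f_n - f_m‖ = 2 whenever (k_{m+1},…,k_n) ≠ 0. Hence if k has infinitely many nonzero entries, (f_n) is not a Cauchy sequence. -/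

import Mathlib

open MeasureTheory Complex Filter
open scoped RealInnerProductSpace ENNReal Topology

noncomputable section

abbrev Ed (d : ℕ) := EuclideanSpace ℝ (Fin d)

/-- Short-time Fourier transform with parameter ℏ. -/
def STFT (ℏ : ℝ) {d : ℕ} (g f : Ed d → ℂ) (x ξ : Ed d) : ℂ :=
  (((2 * Real.pi * ℏ : ℝ) : ℂ)) ^ (-(d : ℂ) / 2) *
    ∫ y : Ed d, Complex.exp (-(Complex.I / (ℏ : ℂ)) * ((inner ℝ ξ y : ℝ) : ℂ)) * f y *
      (starRingEnd ℂ) (g (y - x))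

/-- The Fresnel function F₊. -/
def Fplus (ℏ : ℝ) (d : ℕ) (y : Ed d) : ℂ :=
  (((2 * Real.pi : ℝ) : ℂ) * Complex.I * (ℏ : ℂ)) ^ (-(d : ℂ) / 2) *
    Complex.exp (Complex.I * ((‖y‖ ^ 2 : ℝ) : ℂ) / (2 * (ℏ : ℂ)))

/-- The M^{∞,1} (Sjöstrand) norm with window g. -/
def Msjo (ℏ : ℝ) {d : ℕ} (g f : Ed d → ℂ) : ℝ≥0∞ :=
  ∫⁻ ξ : Ed d, ⨆ x : Ed d, (‖STFT ℏ g f x ξ‖₊ : ℝ≥0∞)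

/-- Gaussian window with diagonal matrix Q = diag(q). -/
def gwin (ℏ : ℝ) {n : ℕ} (q : Fin n → ℝ) (x : Ed n) : ℂ :=
  (((2 * Real.pi * ℏ : ℝ) : ℂ)) ^ (-(n : ℂ) / 2) *
    Complex.exp (-(((∑ j, q j * (x j) ^ 2 : ℝ)) : ℂ) / (2 * (ℏ : ℂ)))

/-- The cylinder plane wave `x ↦ e^{(i/ℏ) ∑_{j<m} k_j x_j}` viewed as a function on ℝⁿ. -/
def planeWave (ℏ : ℝ) (k : ℕ → ℝ) (m n : ℕ) (hmn : m ≤ n) : Ed n → ℂ :=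
  fun x => Complex.exp ((Complex.I / (ℏ : ℂ)) *
    ((∑ j : Fin m, k (j : ℕ) * x (Fin.castLE hmn j) : ℝ) : ℂ))

namespace PWaux

open Real in
lemma gauss1 {B : ℝ} (hB : 0 < B) (c : ℝ) :
    ∫ t : ℝ, Real.exp (-B * (t - c) ^ 2) = Real.sqrt (Real.pi / B) := by
  have h := integral_add_right_eq_self (μ := volume)
    (fun t : ℝ => Real.exp (-B * (t - c) ^ 2)) c
  simp only [add_sub_cancel_right] at h
  rw [← h, integral_gaussian]

lemma fgauss1 {b : ℝ} (hb : 0 < b) (a x : ℝ) :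
    ∫ t : ℝ, Complex.exp (Complex.I * a * t) * Complex.exp (-(b : ℂ) * (t - x) ^ 2)
      = ((Real.sqrt (Real.pi / b) * Real.exp (-(a ^ 2 / (4 * b))) : ℝ) : ℂ) *
        Complex.exp (Complex.I * a * x) := by
  have h0 : ∫ t : ℝ, Complex.exp (Complex.I * a * t) * Complex.exp (-(b : ℂ) * (t - x) ^ 2)
      = ∫ t : ℝ, Complex.exp (Complex.I * a * (t + x)) * Complex.exp (-(b : ℂ) * t ^ 2) := by
    rw [← integral_add_right_eq_self (μ := volume)
      (fun t : ℝ => Complex.exp (Complex.I * a * t) * Complex.exp (-(b : ℂ) * (t - x) ^ 2)) x]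
    simp
  rw [h0]
  have h1 : ∀ t : ℝ, Complex.exp (Complex.I * a * (t + x)) * Complex.exp (-(b : ℂ) * t ^ 2)
      = Complex.exp (Complex.I * a * x) *
        (Complex.exp (Complex.I * a * t) * Complex.exp (-(b : ℂ) * t ^ 2)) := by
    intro t; rw [← Complex.exp_add, ← Complex.exp_add, ← Complex.exp_add]; ring_nf
  simp_rw [h1]
  rw [integral_const_mul, fourierIntegral_gaussian (by simpa using hb) (a : ℂ)]
  have h2 : ((Real.pi : ℂ) / (b : ℂ)) ^ (1 / 2 : ℂ) = ((Real.sqrt (Real.pi / b) : ℝ) : ℂ) := by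
    rw [Real.sqrt_eq_rpow, Complex.ofReal_cpow (by positivity)]
    push_cast
    norm_num
  have h3 : -(a : ℂ) ^ 2 / (4 * b) = ((-(a ^ 2 / (4 * b)) : ℝ) : ℂ) := by push_cast; ring
  rw [h2, h3, ← Complex.ofReal_exp]
  push_cast
  ring

/-- auxiliary 1D integrand -/
def h1d (ℏ : ℝ) (qj cj ξj xj : ℝ) (t : ℝ) : ℂ :=
  Complex.exp (Complex.I * (((cj - ξj) / ℏ : ℝ) : ℂ) * (t : ℂ)) *
    Complex.exp (-((qj / (2 * ℏ) : ℝ) : ℂ) * ((t : ℂ) - (xj : ℝ)) ^ 2)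

/-- the modulus of the STFT of a plane wave -/
def Rr (ℏ : ℝ) {n : ℕ} (q c : Fin n → ℝ) (ξ : Ed n) : ℝ :=
  (2 * Real.pi * ℏ) ^ (-(n : ℝ)) *
    ∏ j, (Real.sqrt (Real.pi / (q j / (2 * ℏ))) *
      Real.exp (-(((c j - ξ j) / ℏ) ^ 2 / (4 * (q j / (2 * ℏ))))))

variable {ℏ : ℝ} {n : ℕ} {q : Fin n → ℝ}

lemma Rr_pos (hℏ : 0 < ℏ) (hq : ∀ j, 0 < q j) (c : Fin n → ℝ) (ξ : Ed n) :
    0 < Rr ℏ q c ξ := by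
  unfold Rr
  have h2 : ∀ j : Fin n, 0 < Real.sqrt (Real.pi / (q j / (2 * ℏ))) *
      Real.exp (-(((c j - ξ j) / ℏ) ^ 2 / (4 * (q j / (2 * ℏ))))) := by
    intro j
    have h1 : 0 < q j / (2 * ℏ) := div_pos (hq j) (by linarith)
    exact mul_pos (Real.sqrt_pos.2 (div_pos Real.pi_pos h1)) (Real.exp_pos _)
  exact mul_pos (Real.rpow_pos_of_pos (mul_pos (mul_pos two_pos Real.pi_pos) hℏ) _)
    (Finset.prod_pos fun j _ => h2 j)

end PWaux
namespace PWaux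
variable {ℏ : ℝ} {n : ℕ} {q : Fin n → ℝ}

lemma hKre (hℏ : 0 < ℏ) :
    (((2 * Real.pi * ℏ : ℝ) : ℂ)) ^ (-(n : ℂ) / 2)
      = (((2 * Real.pi * ℏ) ^ (-(n : ℝ) / 2) : ℝ) : ℂ) := by
  rw [show (-(n : ℂ) / 2) = ((-(n : ℝ) / 2 : ℝ) : ℂ) by push_cast; ring,
    ← Complex.ofReal_cpow (by positivity)]

lemma hpt (hℏ : 0 < ℏ) (c : Fin n → ℝ) (x ξ : Ed n) (y : Ed n) :
    Complex.exp (-(Complex.I / (ℏ : ℂ)) * ((inner ℝ ξ y : ℝ) : ℂ)) *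
      Complex.exp ((Complex.I / (ℏ : ℂ)) * ((∑ j, c j * y j : ℝ) : ℂ)) *
      (starRingEnd ℂ) (gwin ℏ q (y - x))
    = (((2 * Real.pi * ℏ) ^ (-(n : ℝ) / 2) : ℝ) : ℂ) *
      ∏ j, h1d ℏ (q j) (c j) (ξ j) (x j) (y j) := by
  have hℏ0 : (ℏ : ℂ) ≠ 0 := by exact_mod_cast hℏ.ne'
  have hinner : (inner ℝ ξ y : ℝ) = ∑ j, ξ j * y j := by
    simp [PiLp.inner_apply, RCLike.inner_apply, conj_trivial]
    exact Finset.sum_congr rfl fun j _ => mul_comm _ _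
  have hsub : ∀ j, (y - x) j = y j - x j := fun j => rfl
  have hgw : gwin ℏ q (y - x)
      = (((2 * Real.pi * ℏ) ^ (-(n : ℝ) / 2) *
          Real.exp (-(∑ j, q j * (y j - x j) ^ 2) / (2 * ℏ)) : ℝ) : ℂ) := by
    unfold gwin
    rw [hKre hℏ]
    simp_rw [hsub]
    rw [Complex.ofReal_mul]
    congr 1
    rw [Complex.ofReal_exp]
    congr 1
    push_cast
    ring
  have hexp : -(Complex.I / (ℏ : ℂ)) * (((∑ j, ξ j * y j : ℝ)) : ℂ) +
      (Complex.I / (ℏ : ℂ)) * (((∑ j, c j * y j : ℝ)) : ℂ) +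
      (((-(∑ j, q j * (y j - x j) ^ 2) / (2 * ℏ) : ℝ)) : ℂ)
      = ∑ j, (Complex.I * (((c j - ξ j) / ℏ : ℝ) : ℂ) * ((y j : ℝ) : ℂ) +
          -(((q j / (2 * ℏ) : ℝ)) : ℂ) * (((y j : ℝ) : ℂ) - ((x j : ℝ) : ℂ)) ^ 2) := by
    have hterm : ∀ j : Fin n, Complex.I * (((c j - ξ j) / ℏ : ℝ) : ℂ) * ((y j : ℝ) : ℂ) +
          -(((q j / (2 * ℏ) : ℝ)) : ℂ) * (((y j : ℝ) : ℂ) - ((x j : ℝ) : ℂ)) ^ 2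
        = -(Complex.I / (ℏ : ℂ)) * ((ξ j : ℂ) * (y j : ℂ)) +
          (Complex.I / (ℏ : ℂ)) * ((c j : ℂ) * (y j : ℂ)) +
          -((q j : ℂ) * ((y j : ℂ) - (x j : ℂ)) ^ 2) / (2 * (ℏ : ℂ)) := by
      intro j
      push_cast
      field_simp
      ring
    rw [Finset.sum_congr rfl (fun j _ => hterm j), Finset.sum_add_distrib,
      Finset.sum_add_distrib, ← Finset.mul_sum, ← Finset.mul_sum, ← Finset.sum_div,
      ← Finset.sum_neg_distrib]
    push_cast
    ring
  have hprod : ∏ j, h1d ℏ (q j) (c j) (ξ j) (x j) (y j)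
      = Complex.exp (∑ j, (Complex.I * (((c j - ξ j) / ℏ : ℝ) : ℂ) * ((y j : ℝ) : ℂ) +
          -(((q j / (2 * ℏ) : ℝ)) : ℂ) * (((y j : ℝ) : ℂ) - ((x j : ℝ) : ℂ)) ^ 2)) := by
    simp_rw [h1d, ← Complex.exp_add]
    rw [← Complex.exp_sum]
  rw [hinner, hgw]
  simp only [Complex.conj_ofReal]
  rw [Complex.ofReal_mul, Complex.ofReal_exp, hprod, ← hexp, Complex.exp_add, Complex.exp_add]
  ring

end PWaux
namespace PWaux
variable {ℏ : ℝ} {n : ℕ} {q : Fin n → ℝ}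

lemma h1d_eq (hℏ : 0 < ℏ) (qj cj ξj xj : ℝ) :
    (fun t : ℝ => h1d ℏ qj cj ξj xj t)
      = fun t : ℝ => Complex.exp (-((qj / (2 * ℏ) : ℝ) : ℂ) * (t : ℂ) ^ 2 +
          (Complex.I * (((cj - ξj) / ℏ : ℝ) : ℂ) + 2 * ((qj / (2 * ℏ) : ℝ) : ℂ) * (xj : ℂ)) * (t : ℂ) +
          (-((qj / (2 * ℏ) : ℝ) : ℂ) * (xj : ℂ) ^ 2)) := by
  funext t
  unfold h1d
  rw [← Complex.exp_add]
  congr 1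
  ring

lemma h1d_integrable (hℏ : 0 < ℏ) {qj : ℝ} (hqj : 0 < qj) (cj ξj xj : ℝ) :
    Integrable (fun t : ℝ => h1d ℏ qj cj ξj xj t) := by
  rw [h1d_eq hℏ]
  have hb : 0 < qj / (2 * ℏ) := div_pos hqj (by linarith)
  exact integrable_cexp_quadratic
    (show (0:ℝ) < (((qj / (2 * ℏ) : ℝ)) : ℂ).re by rw [Complex.ofReal_re]; exact hb) _ _

lemma h1d_integral (hℏ : 0 < ℏ) {qj : ℝ} (hqj : 0 < qj) (cj ξj xj : ℝ) :
    ∫ t : ℝ, h1d ℏ qj cj ξj xj t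
      = ((Real.sqrt (Real.pi / (qj / (2 * ℏ))) *
          Real.exp (-(((cj - ξj) / ℏ) ^ 2 / (4 * (qj / (2 * ℏ))))) : ℝ) : ℂ) *
        Complex.exp (Complex.I * (((cj - ξj) / ℏ : ℝ) : ℂ) * (xj : ℂ)) :=
  fgauss1 (div_pos hqj (by linarith)) ((cj - ξj) / ℏ) xj

/-- transfer of an integral over Euclidean space to the product space -/
lemma ed_integral_prod (F : Fin n → ℝ → ℂ) :
    ∫ y : Ed n, ∏ j, F j (y j) = ∏ j, ∫ t : ℝ, F j t := by
  rw [← MeasurePreserving.integral_comp'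
    (MeasurePreserving.symm _ (EuclideanSpace.volume_preserving_symm_measurableEquiv_toLp (Fin n)))
    (fun y : Ed n => ∏ j, F j (y j))]
  exact integral_fintype_prod_eq_prod (ι := Fin n) F

lemma ed_integrable_prod {F : Fin n → ℝ → ℂ} (hF : ∀ j, Integrable (F j)) :
    Integrable (fun y : Ed n => ∏ j, F j (y j)) := by
  have h := Integrable.fintype_prod (E := ℝ) (f := F) hF
  exact (MeasurePreserving.integrable_comp_emb
    (MeasurePreserving.symm _ (EuclideanSpace.volume_preserving_symm_measurableEquiv_toLp (Fin n)))
    (MeasurableEquiv.measurableEmbedding _)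
    (g := fun y : Ed n => ∏ j, F j (y j))).1 h

lemma integrand_integrable (hℏ : 0 < ℏ) (hq : ∀ j, 0 < q j) (c : Fin n → ℝ) (x ξ : Ed n) :
    Integrable (fun y : Ed n =>
      Complex.exp (-(Complex.I / (ℏ : ℂ)) * ((inner ℝ ξ y : ℝ) : ℂ)) *
      Complex.exp ((Complex.I / (ℏ : ℂ)) * ((∑ j, c j * y j : ℝ) : ℂ)) *
      (starRingEnd ℂ) (gwin ℏ q (y - x))) := by
  have h : Integrable (fun y : Ed n => ∏ j, h1d ℏ (q j) (c j) (ξ j) (x j) (y j)) :=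
    ed_integrable_prod (fun j => h1d_integrable hℏ (hq j) _ _ _)
  exact (h.const_mul _).congr (Filter.Eventually.of_forall fun y => (hpt hℏ c x ξ y).symm)

lemma stft_pw (hℏ : 0 < ℏ) (hq : ∀ j, 0 < q j) (c : Fin n → ℝ) (x ξ : Ed n) :
    STFT ℏ (gwin ℏ q)
        (fun y => Complex.exp ((Complex.I / (ℏ : ℂ)) * ((∑ j, c j * y j : ℝ) : ℂ))) x ξ
      = ((Rr ℏ q c ξ : ℝ) : ℂ) *
        Complex.exp (Complex.I * (((∑ j, (c j - ξ j) * x j) / ℏ : ℝ) : ℂ)) := by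
  unfold STFT
  rw [hKre hℏ]
  simp_rw [hpt hℏ c x ξ]
  rw [integral_const_mul, ed_integral_prod,
    Finset.prod_congr rfl (fun j _ => h1d_integral hℏ (hq j) (c j) (ξ j) (x j)),
    Finset.prod_mul_distrib, ← Complex.ofReal_prod, ← Complex.exp_sum]
  have hsum : (∑ j, Complex.I * (((c j - ξ j) / ℏ : ℝ) : ℂ) * ((x j : ℝ) : ℂ))
      = Complex.I * (((∑ j, (c j - ξ j) * x j) / ℏ : ℝ) : ℂ) := by
    push_cast
    rw [Finset.sum_div, Finset.mul_sum]
    exact Finset.sum_congr rfl fun j _ => by ring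
  rw [hsum]
  have hR : Rr ℏ q c ξ = (2 * Real.pi * ℏ) ^ (-(n : ℝ) / 2) *
      ((2 * Real.pi * ℏ) ^ (-(n : ℝ) / 2) *
        ∏ j, (Real.sqrt (Real.pi / (q j / (2 * ℏ))) *
          Real.exp (-(((c j - ξ j) / ℏ) ^ 2 / (4 * (q j / (2 * ℏ))))))) := by
    unfold Rr
    rw [← mul_assoc, ← Real.rpow_add (by positivity)]
    norm_num
  rw [hR]
  push_cast
  ring

end PWaux
namespace PWaux
variable {ℏ : ℝ} {n : ℕ} {q : Fin n → ℝ}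

/-- STFT of a difference of plane waves. -/
lemma stft_sub (hℏ : 0 < ℏ) (hq : ∀ j, 0 < q j) (c1 c2 : Fin n → ℝ) (x ξ : Ed n) :
    STFT ℏ (gwin ℏ q)
        (fun y => Complex.exp ((Complex.I / (ℏ : ℂ)) * ((∑ j, c1 j * y j : ℝ) : ℂ)) -
          Complex.exp ((Complex.I / (ℏ : ℂ)) * ((∑ j, c2 j * y j : ℝ) : ℂ))) x ξ
      = ((Rr ℏ q c1 ξ : ℝ) : ℂ) *
          Complex.exp (Complex.I * (((∑ j, (c1 j - ξ j) * x j) / ℏ : ℝ) : ℂ)) -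
        ((Rr ℏ q c2 ξ : ℝ) : ℂ) *
          Complex.exp (Complex.I * (((∑ j, (c2 j - ξ j) * x j) / ℏ : ℝ) : ℂ)) := by
  rw [← stft_pw hℏ hq c1 x ξ, ← stft_pw hℏ hq c2 x ξ]
  unfold STFT
  rw [← mul_sub, ← integral_sub (integrand_integrable hℏ hq c1 x ξ)
    (integrand_integrable hℏ hq c2 x ξ)]
  congr 1
  apply integral_congr_ae
  filter_upwards with y
  ring

lemma Rr_integrable (hℏ : 0 < ℏ) (hq : ∀ j, 0 < q j) (c : Fin n → ℝ) :
    Integrable (fun ξ : Ed n => Rr ℏ q c ξ) := by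
  unfold Rr
  apply Integrable.const_mul
  have hF : ∀ j : Fin n, Integrable (fun t : ℝ => Real.sqrt (Real.pi / (q j / (2 * ℏ))) *
      Real.exp (-(((c j - t) / ℏ) ^ 2 / (4 * (q j / (2 * ℏ)))))) := by
    intro j
    have hB : 0 < 1 / (2 * ℏ * q j) := by
      have := hq j; positivity
    have h1 : Integrable (fun t : ℝ => Real.exp (-(1 / (2 * ℏ * q j)) * (t - c j) ^ 2)) :=
      (integrable_exp_neg_mul_sq hB).comp_sub_right (c j)
    apply Integrable.const_mul
    apply h1.congr
    filter_upwards with t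
    congr 1
    have hqj := hq j
    field_simp
    ring
  have h := Integrable.fintype_prod (𝕜 := ℝ) (f := fun j t =>
    Real.sqrt (Real.pi / (q j / (2 * ℏ))) *
      Real.exp (-(((c j - t) / ℏ) ^ 2 / (4 * (q j / (2 * ℏ)))))) hF
  exact (MeasurePreserving.integrable_comp_emb
    (MeasurePreserving.symm _ (EuclideanSpace.volume_preserving_symm_measurableEquiv_toLp (Fin n)))
    (MeasurableEquiv.measurableEmbedding _)
    (g := fun ξ : Ed n => ∏ j, Real.sqrt (Real.pi / (q j / (2 * ℏ))) *
      Real.exp (-(((c j - ξ j) / ℏ) ^ 2 / (4 * (q j / (2 * ℏ))))))).1 h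

lemma ed_integral_prod_real (F : Fin n → ℝ → ℝ) :
    ∫ y : Ed n, ∏ j, F j (y j) = ∏ j, ∫ t : ℝ, F j t := by
  rw [← MeasurePreserving.integral_comp'
    (MeasurePreserving.symm _ (EuclideanSpace.volume_preserving_symm_measurableEquiv_toLp (Fin n)))
    (fun y : Ed n => ∏ j, F j (y j))]
  exact integral_fintype_prod_eq_prod (ι := Fin n) F

lemma Rr_integral (hℏ : 0 < ℏ) (hq : ∀ j, 0 < q j) (c : Fin n → ℝ) :
    ∫ ξ : Ed n, Rr ℏ q c ξ = 1 := by
  unfold Rr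
  rw [integral_const_mul, ed_integral_prod_real (fun j t => Real.sqrt (Real.pi / (q j / (2 * ℏ))) *
      Real.exp (-(((c j - t) / ℏ) ^ 2 / (4 * (q j / (2 * ℏ))))))]
  have h1 : ∀ j : Fin n, (∫ t : ℝ, Real.sqrt (Real.pi / (q j / (2 * ℏ))) *
      Real.exp (-(((c j - t) / ℏ) ^ 2 / (4 * (q j / (2 * ℏ)))))) = 2 * Real.pi * ℏ := by
    intro j
    have hqj := hq j
    rw [integral_const_mul]
    have heq : (fun t : ℝ => Real.exp (-(((c j - t) / ℏ) ^ 2 / (4 * (q j / (2 * ℏ))))))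
        = fun t : ℝ => Real.exp (-(1 / (2 * ℏ * q j)) * (t - c j) ^ 2) := by
      funext t
      congr 1
      field_simp
      ring
    rw [heq, gauss1 (by positivity) (c j), ← Real.sqrt_mul (by positivity)]
    rw [show Real.pi / (q j / (2 * ℏ)) * (Real.pi / (1 / (2 * ℏ * q j))) = (2 * Real.pi * ℏ) ^ 2 by
      field_simp]
    exact Real.sqrt_sq (by positivity)
  rw [Finset.prod_congr rfl (fun j _ => h1 j), Finset.prod_const, Finset.card_univ,
    Fintype.card_fin, ← Real.rpow_natCast (2 * Real.pi * ℏ) n, ← Real.rpow_add (by positivity)]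
  norm_num

end PWaux
namespace PWaux
variable {ℏ : ℝ} {n : ℕ} {q : Fin n → ℝ}

lemma norm_stft_sub_le (hℏ : 0 < ℏ) (hq : ∀ j, 0 < q j) (c1 c2 : Fin n → ℝ) (x ξ : Ed n) :
    ‖STFT ℏ (gwin ℏ q)
        (fun y => Complex.exp ((Complex.I / (ℏ : ℂ)) * ((∑ j, c1 j * y j : ℝ) : ℂ)) -
          Complex.exp ((Complex.I / (ℏ : ℂ)) * ((∑ j, c2 j * y j : ℝ) : ℂ))) x ξ‖
      ≤ Rr ℏ q c1 ξ + Rr ℏ q c2 ξ := by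
  rw [stft_sub hℏ hq c1 c2 x ξ]
  refine (norm_sub_le _ _).trans ?_
  have he : ∀ r : ℝ, ‖Complex.exp (Complex.I * (r : ℂ))‖ = 1 := by
    intro r
    rw [Complex.norm_exp]
    simp
  rw [norm_mul, norm_mul, he, he, Complex.norm_real, Complex.norm_real, mul_one, mul_one]
  have h1 := Rr_pos hℏ hq c1 ξ
  have h2 := Rr_pos hℏ hq c2 ξ
  rw [Real.norm_of_nonneg h1.le, Real.norm_of_nonneg h2.le]

lemma norm_stft_sub_at (hℏ : 0 < ℏ) (hq : ∀ j, 0 < q j) (c1 c2 : Fin n → ℝ) (j0 : Fin n)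
    (hj0 : c1 j0 ≠ c2 j0) (ξ : Ed n) :
    ‖STFT ℏ (gwin ℏ q)
        (fun y => Complex.exp ((Complex.I / (ℏ : ℂ)) * ((∑ j, c1 j * y j : ℝ) : ℂ)) -
          Complex.exp ((Complex.I / (ℏ : ℂ)) * ((∑ j, c2 j * y j : ℝ) : ℂ)))
        (EuclideanSpace.single j0 (Real.pi * ℏ / (c1 j0 - c2 j0))) ξ‖
      = Rr ℏ q c1 ξ + Rr ℏ q c2 ξ := by
  set x0 : Ed n := EuclideanSpace.single j0 (Real.pi * ℏ / (c1 j0 - c2 j0)) with hx0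
  rw [stft_sub hℏ hq c1 c2 x0 ξ]
  have hx0j : ∀ j : Fin n, x0 j = if j = j0 then Real.pi * ℏ / (c1 j0 - c2 j0) else 0 := by
    intro j; rw [hx0, EuclideanSpace.single_apply]
  have hsum : ∑ j, (c1 j - ξ j) * x0 j = (∑ j, (c2 j - ξ j) * x0 j) + Real.pi * ℏ := by
    have : ∑ j, ((c1 j - ξ j) * x0 j - (c2 j - ξ j) * x0 j) = Real.pi * ℏ := by
      have hterm : ∀ j : Fin n, (c1 j - ξ j) * x0 j - (c2 j - ξ j) * x0 j
          = (c1 j - c2 j) * x0 j := fun j => by ring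
      rw [Finset.sum_congr rfl fun j _ => hterm j]
      simp_rw [hx0j, mul_ite, mul_zero]
      rw [Finset.sum_ite_eq' Finset.univ j0 (fun j => (c1 j - c2 j) *
        (Real.pi * ℏ / (c1 j0 - c2 j0)))]
      simp only [Finset.mem_univ, if_true]
      field_simp [sub_ne_zero.2 hj0]
    rw [Finset.sum_sub_distrib] at this
    linarith
  have hφ : (((∑ j, (c1 j - ξ j) * x0 j) / ℏ : ℝ) : ℂ)
      = (((∑ j, (c2 j - ξ j) * x0 j) / ℏ : ℝ) : ℂ) + (Real.pi : ℂ) := by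
    rw [hsum]
    push_cast
    have : (ℏ : ℂ) ≠ 0 := by exact_mod_cast hℏ.ne'
    field_simp
  rw [hφ, mul_add, Complex.exp_add, mul_comm Complex.I (Real.pi : ℂ),
    Complex.exp_pi_mul_I]
  have h1 := Rr_pos hℏ hq c1 ξ
  have h2 := Rr_pos hℏ hq c2 ξ
  have : ((Rr ℏ q c1 ξ : ℝ) : ℂ) *
      (Complex.exp (Complex.I * (((∑ j, (c2 j - ξ j) * x0 j) / ℏ : ℝ) : ℂ)) * (-1)) -
      ((Rr ℏ q c2 ξ : ℝ) : ℂ) *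
        Complex.exp (Complex.I * (((∑ j, (c2 j - ξ j) * x0 j) / ℏ : ℝ) : ℂ))
      = -(((Rr ℏ q c1 ξ + Rr ℏ q c2 ξ : ℝ)) : ℂ) *
        Complex.exp (Complex.I * (((∑ j, (c2 j - ξ j) * x0 j) / ℏ : ℝ) : ℂ)) := by
    push_cast
    ring
  rw [this, norm_mul, norm_neg, Complex.norm_real, Real.norm_of_nonneg (by positivity)]
  have he : ‖Complex.exp (Complex.I * (((∑ j, (c2 j - ξ j) * x0 j) / ℏ : ℝ) : ℂ))‖ = 1 := by
    rw [Complex.norm_exp]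
    simp
  rw [he, mul_one]

lemma msjo_eq (hℏ : 0 < ℏ) (hq : ∀ j, 0 < q j) (c1 c2 : Fin n → ℝ) (j0 : Fin n)
    (hj0 : c1 j0 ≠ c2 j0) :
    Msjo ℏ (gwin ℏ q)
        (fun y => Complex.exp ((Complex.I / (ℏ : ℂ)) * ((∑ j, c1 j * y j : ℝ) : ℂ)) -
          Complex.exp ((Complex.I / (ℏ : ℂ)) * ((∑ j, c2 j * y j : ℝ) : ℂ))) = 2 := by
  unfold Msjo
  have hsup : ∀ ξ : Ed n, (⨆ x : Ed n, (‖STFT ℏ (gwin ℏ q)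
      (fun y => Complex.exp ((Complex.I / (ℏ : ℂ)) * ((∑ j, c1 j * y j : ℝ) : ℂ)) -
        Complex.exp ((Complex.I / (ℏ : ℂ)) * ((∑ j, c2 j * y j : ℝ) : ℂ))) x ξ‖₊ : ℝ≥0∞))
      = ENNReal.ofReal (Rr ℏ q c1 ξ + Rr ℏ q c2 ξ) := by
    intro ξ
    apply le_antisymm
    · refine iSup_le fun x => ?_
      rw [← enorm_eq_nnnorm, ← ofReal_norm]
      exact ENNReal.ofReal_le_ofReal (norm_stft_sub_le hℏ hq c1 c2 x ξ)
    · apply le_iSup_of_le (EuclideanSpace.single j0 (Real.pi * ℏ / (c1 j0 - c2 j0)))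
      rw [← enorm_eq_nnnorm, ← ofReal_norm, norm_stft_sub_at hℏ hq c1 c2 j0 hj0 ξ]
  rw [lintegral_congr hsup]
  have hint : Integrable (fun ξ : Ed n => Rr ℏ q c1 ξ + Rr ℏ q c2 ξ) :=
    (Rr_integrable hℏ hq c1).add (Rr_integrable hℏ hq c2)
  have hnn : 0 ≤ᵐ[(volume : Measure (Ed n))] fun ξ : Ed n => Rr ℏ q c1 ξ + Rr ℏ q c2 ξ :=
    Filter.Eventually.of_forall fun ξ =>
      add_nonneg (Rr_pos hℏ hq c1 ξ).le (Rr_pos hℏ hq c2 ξ).le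
  rw [← ofReal_integral_eq_lintegral_ofReal hint hnn,
    integral_add (Rr_integrable hℏ hq c1) (Rr_integrable hℏ hq c2),
    Rr_integral hℏ hq c1, Rr_integral hℏ hq c2]
  norm_num

end PWaux
namespace PWaux

lemma pw_full (ℏ : ℝ) (k : ℕ → ℝ) (n : ℕ) :
    planeWave ℏ k n n le_rfl
      = fun y : Ed n => Complex.exp ((Complex.I / (ℏ : ℂ)) *
          ((∑ j : Fin n, (fun j : Fin n => k (j : ℕ)) j * y j : ℝ) : ℂ)) := rfl

lemma pw_trunc (ℏ : ℝ) (k : ℕ → ℝ) {m n : ℕ} (hmn : m ≤ n) :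
    planeWave ℏ k m n hmn
      = fun y : Ed n => Complex.exp ((Complex.I / (ℏ : ℂ)) *
          ((∑ j : Fin n,
            (fun j : Fin n => if (j : ℕ) < m then k (j : ℕ) else 0) j * y j : ℝ) : ℂ)) := by
  funext y
  unfold planeWave
  congr 2
  have h1 : ∀ j : Fin n, (if (j : ℕ) < m then k (j : ℕ) else 0) * y j
      = if (j : ℕ) < m then k (j : ℕ) * y j else 0 := fun j => by split <;> simp
  rw [Finset.sum_congr rfl fun j _ => h1 j, ← Finset.sum_filter]
  have h2 : Finset.univ.filter (fun j : Fin n => (j : ℕ) < m)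
      = Finset.univ.map (Fin.castLEEmb hmn) := by
    ext j
    simp only [Finset.mem_filter, Finset.mem_univ, true_and, Finset.mem_map,
      Fin.coe_castLEEmb]
    constructor
    · intro hj
      exact ⟨⟨(j : ℕ), hj⟩, Fin.ext rfl⟩
    · rintro ⟨i, rfl⟩
      simpa using i.2
  rw [h2, Finset.sum_map]
  rfl

end PWaux
/-- the cylindrical plane-wave approximations are at mutual
`M^{∞,1}(ℝ^∞)`-distance 2 whenever the truncations differ; hence, if `k` has
infinitely many nonzero entries, they do not form a Cauchy sequence. -/
theorem planeWave_not_cauchy (ℏ : ℝ) (hℏ : 0 < ℏ) (k : ℕ → ℝ) (q : ℕ → ℝ)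
    (hq : ∀ j, 0 < q j) :
    (∀ m n : ℕ, ∀ hmn : m < n, (∃ j : Fin n, m ≤ (j : ℕ) ∧ k (j : ℕ) ≠ 0) →
      Msjo ℏ (gwin ℏ (fun j : Fin n => q (j : ℕ)))
          (fun x => planeWave ℏ k n n le_rfl x - planeWave ℏ k m n hmn.le x) = 2) ∧
    ({i : ℕ | k i ≠ 0}.Infinite →
      ¬ ∀ δ : ℝ≥0∞, 0 < δ → ∃ N : ℕ, ∀ m n : ℕ, ∀ hmn : m < n, N ≤ m →
        Msjo ℏ (gwin ℏ (fun j : Fin n => q (j : ℕ)))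
            (fun x => planeWave ℏ k n n le_rfl x - planeWave ℏ k m n hmn.le x) < δ) := by
  have main : ∀ m n : ℕ, ∀ hmn : m < n, (∃ j : Fin n, m ≤ (j : ℕ) ∧ k (j : ℕ) ≠ 0) →
      Msjo ℏ (gwin ℏ (fun j : Fin n => q (j : ℕ)))
        (fun x => planeWave ℏ k n n le_rfl x - planeWave ℏ k m n hmn.le x) = 2 := by
    intro m n hmn hj
    obtain ⟨j0, hj0m, hj0k⟩ := hj
    have hfun : (fun x : Ed n => planeWave ℏ k n n le_rfl x - planeWave ℏ k m n hmn.le x)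
        = fun y : Ed n =>
          Complex.exp ((Complex.I / (ℏ : ℂ)) *
            ((∑ j : Fin n, (fun j : Fin n => k (j : ℕ)) j * y j : ℝ) : ℂ)) -
          Complex.exp ((Complex.I / (ℏ : ℂ)) *
            ((∑ j : Fin n,
              (fun j : Fin n => if (j : ℕ) < m then k (j : ℕ) else 0) j * y j : ℝ) : ℂ)) := by
      funext y
      rw [PWaux.pw_full ℏ k n, PWaux.pw_trunc ℏ k hmn.le]
    rw [hfun]
    refine PWaux.msjo_eq hℏ (fun j : Fin n => hq (j : ℕ))
      (fun j : Fin n => k (j : ℕ))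
      (fun j : Fin n => if (j : ℕ) < m then k (j : ℕ) else 0) j0 ?_
    simp only [not_lt.2 hj0m, if_neg (not_lt.2 hj0m)]
    exact hj0k
  refine ⟨main, fun hinf hc => ?_⟩
  obtain ⟨N, hN⟩ := hc 1 (by norm_num)
  obtain ⟨j, hjmem, hjN⟩ := hinf.exists_gt N
  have h2 := main N (j + 1) (by omega) ⟨⟨j, by omega⟩, by simp; omega, hjmem⟩
  have h3 := hN N (j + 1) (by omega) le_rfl
  rw [h2] at h3
  exact absurd h3 (by norm_num)
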